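/- Let G be a group and let E and H be subgroups of G such that E is perfect (⁅E,E⁆ = E), E normalizes H, and the centralizer of E in G equals the center of G. If ⁅H,E⁆ is contained in the center of G, then H is contained in the center of G. -/

import Mathlib

open scoped commutatorElement
/-- Let `G` be a group and `E`, `H` subgroups such that `E` is perfect, `E`
normalizes `H`, and the centralizer of `E` in `G` is the center of `G`.
If `⁅H,E⁆` is central, then `H` is central. -/
theorem le_center_of_commutator_le_center
    {G : Type*} [Group G] (E H : Subgroup G)
    (hperf : ⁅E, E⁆ = E)
    (hnorm : ∀ e ∈ E, ∀ h ∈ H, e⁻¹ * h * e ∈ H)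
    (hcent : Subgroup.centralizer (E : Set G) = Subgroup.center G)
    (hHE : ⁅H, E⁆ ≤ Subgroup.center G) :
    H ≤ Subgroup.center G := by
  intro h hh
  rw [← hcent, Subgroup.mem_centralizer_iff]
  -- the values ⁅h, x⁆ for x ∈ E are central
  have hz : ∀ x ∈ E, ∀ g : G, g * ⁅h, x⁆ = ⁅h, x⁆ * g := fun x hx g =>
    Subgroup.mem_center_iff.mp (hHE (Subgroup.commutator_mem_commutator hh hx)) g
  have hconj : ∀ x ∈ E, ∀ g : G, g * ⁅h, x⁆ * g⁻¹ = ⁅h, x⁆ := by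
    intro x hx g
    rw [hz x hx g]
    group
  -- x ↦ ⁅h, x⁆ is multiplicative on E
  have zmul : ∀ x ∈ E, ∀ y ∈ E, ⁅h, x * y⁆ = ⁅h, x⁆ * ⁅h, y⁆ := by
    intro x hx y hy
    have e1 : ⁅h, x * y⁆ = ⁅h, x⁆ * (x * ⁅h, y⁆ * x⁻¹) := by
      simp only [commutatorElement_def]
      group
    rw [e1, hconj y hy x]
  have zinv : ∀ x ∈ E, ⁅h, x⁻¹⁆ = ⁅h, x⁆⁻¹ := by
    intro x hx
    have := zmul x hx x⁻¹ (inv_mem hx)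
    rw [mul_inv_cancel] at this
    simp only [commutatorElement_def] at this ⊢
    have h1 : (1 : G) = h * 1 * h⁻¹ * 1⁻¹ := by group
    rw [← h1] at this
    exact eq_inv_of_mul_eq_one_right this.symm
  -- hence ⁅h, ⁅a, b⁆⁆ = 1 for a, b ∈ E
  have key : E ≤ Subgroup.centralizer ({h} : Set G) := by
    rw [← hperf, Subgroup.commutator_le]
    intro a ha b hb
    rw [Subgroup.mem_centralizer_iff]
    intro g hg
    rw [Set.mem_singleton_iff] at hg
    rw [hg]
    have hz1 : ⁅h, ⁅a, b⁆⁆ = 1 := by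
      have m1 : a * b ∈ E := mul_mem ha hb
      have m2 : a * b * a⁻¹ ∈ E := mul_mem m1 (inv_mem ha)
      rw [commutatorElement_def a b, zmul _ m2 _ (inv_mem hb), zmul _ m1 _ (inv_mem ha),
        zmul a ha b hb, zinv a ha, zinv b hb]
      have ca : Commute ⁅h, b⁆ ⁅h, a⁆ := hz a ha ⁅h, b⁆
      have ca' : ⁅h, b⁆ * ⁅h, a⁆⁻¹ = ⁅h, a⁆⁻¹ * ⁅h, b⁆ := ca.inv_right.eq
      calc ⁅h, a⁆ * ⁅h, b⁆ * ⁅h, a⁆⁻¹ * ⁅h, b⁆⁻¹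
          = ⁅h, a⁆ * (⁅h, b⁆ * ⁅h, a⁆⁻¹) * ⁅h, b⁆⁻¹ := by group
        _ = ⁅h, a⁆ * (⁅h, a⁆⁻¹ * ⁅h, b⁆) * ⁅h, b⁆⁻¹ := by rw [ca']
        _ = 1 := by group
    exact (commutatorElement_eq_one_iff_commute.mp hz1).eq
  intro g hg
  have := key hg
  rw [Subgroup.mem_centralizer_iff] at this
  exact (this h (Set.mem_singleton h)).symm
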